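/- arXiv:1309.2782 — 2 statements merged into one kernel-verified Lean document; each statement's English description precedes it below -/
import Mathlib

section
/- Let G be a groupoid with finitely many morphisms, and let M(γ) ∈ Matrix Γ Γ ℂ denote the matrix of the operator D(γ) (left convolution by δ_γ) in the standard (delta-function) basis of Γ → ℂ. Then for all γ₁, γ₂ ∈ Γ: Tr[M(γ₁) * M(γ₂)ᵀ] = 0 if γ₁ ≠ γ₂, and Tr[M(γ) * M(γ)ᵀ] equals the number of morphisms η ∈ Γ whose source is the target of γ (i.e., the number of morphisms composable on the right with γ). In particular, if G is connected (any two objects are joined by a morphism), this number equals (number of objects of G) × (order of the isotropy group of any object), independently of γ. -/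
open CategoryTheory

/-- The convolution product of the groupoid algebra of a finite groupoid `G`, on functions
on the type `Γ = Σ x y : G, x ⟶ y` of all morphisms. -/
noncomputable def groupoidConv {G : Type*} [Groupoid G] [Fintype G] [DecidableEq G]
    [∀ x y : G, Fintype (x ⟶ y)] [∀ x y : G, DecidableEq (x ⟶ y)]
    (f₁ f₂ : (Σ x y : G, x ⟶ y) → ℂ) : (Σ x y : G, x ⟶ y) → ℂ :=
  fun γ => ∑ x : G, ∑ y : G, ∑ z : G, ∑ a : x ⟶ y, ∑ b : y ⟶ z,
    if (⟨x, z, a ≫ b⟩ : Σ x y : G, x ⟶ y) = γ then f₁ ⟨x, y, a⟩ * f₂ ⟨y, z, b⟩ else 0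

/-- The delta (indicator) function of a morphism `γ`. -/
def groupoidDelta {G : Type*} [Groupoid G] [DecidableEq G]
    [∀ x y : G, DecidableEq (x ⟶ y)] (γ : Σ x y : G, x ⟶ y) :
    (Σ x y : G, x ⟶ y) → ℂ :=
  fun η => if η = γ then 1 else 0

theorem groupoidConv_add_right {G : Type*} [Groupoid G] [Fintype G] [DecidableEq G]
    [∀ x y : G, Fintype (x ⟶ y)] [∀ x y : G, DecidableEq (x ⟶ y)]
    (f g₁ g₂ : (Σ x y : G, x ⟶ y) → ℂ) :
    groupoidConv f (g₁ + g₂) = groupoidConv f g₁ + groupoidConv f g₂ := by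
  funext γ
  simp only [groupoidConv, Pi.add_apply, ← Finset.sum_add_distrib]
  refine Finset.sum_congr rfl fun x _ => Finset.sum_congr rfl fun y _ =>
    Finset.sum_congr rfl fun z _ => Finset.sum_congr rfl fun a _ =>
    Finset.sum_congr rfl fun b _ => ?_
  split_ifs <;> ring

theorem groupoidConv_smul_right {G : Type*} [Groupoid G] [Fintype G] [DecidableEq G]
    [∀ x y : G, Fintype (x ⟶ y)] [∀ x y : G, DecidableEq (x ⟶ y)]
    (c : ℂ) (f g : (Σ x y : G, x ⟶ y) → ℂ) :
    groupoidConv f (c • g) = c • groupoidConv f g := by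
  funext γ
  simp only [groupoidConv, Pi.smul_apply, smul_eq_mul, Finset.mul_sum]
  refine Finset.sum_congr rfl fun x _ => Finset.sum_congr rfl fun y _ =>
    Finset.sum_congr rfl fun z _ => Finset.sum_congr rfl fun a _ =>
    Finset.sum_congr rfl fun b _ => ?_
  split_ifs <;> ring

/-- Left convolution by the delta function of `γ`, as a linear operator: `D(γ) f := δ_γ ∗ f`. -/
noncomputable def groupoidD {G : Type*} [Groupoid G] [Fintype G] [DecidableEq G]
    [∀ x y : G, Fintype (x ⟶ y)] [∀ x y : G, DecidableEq (x ⟶ y)]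
    (γ : Σ x y : G, x ⟶ y) :
    ((Σ x y : G, x ⟶ y) → ℂ) →ₗ[ℂ] ((Σ x y : G, x ⟶ y) → ℂ) where
  toFun f := groupoidConv (groupoidDelta γ) f
  map_add' g₁ g₂ := groupoidConv_add_right _ g₁ g₂
  map_smul' c g := groupoidConv_smul_right c _ g

/-- The matrix `M(γ)` of the operator `D(γ)` in the standard (delta-function) basis of the
groupoid algebra. -/
noncomputable def groupoidM {G : Type*} [Groupoid G] [Fintype G] [DecidableEq G]
    [∀ x y : G, Fintype (x ⟶ y)] [∀ x y : G, DecidableEq (x ⟶ y)]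
    (γ : Σ x y : G, x ⟶ y) : Matrix (Σ x y : G, x ⟶ y) (Σ x y : G, x ⟶ y) ℂ :=
  LinearMap.toMatrix (Pi.basisFun ℂ (Σ x y : G, x ⟶ y))
    (Pi.basisFun ℂ (Σ x y : G, x ⟶ y)) (groupoidD γ)


section Aux

open Matrix

variable {G : Type*} [Groupoid G] [Fintype G] [DecidableEq G]
    [∀ x y : G, Fintype (x ⟶ y)] [∀ x y : G, DecidableEq (x ⟶ y)]

lemma groupoidConv_delta_delta (c d : G) (g : c ⟶ d) (u v : G) (e : u ⟶ v)
    (ξ : Σ x y : G, x ⟶ y) :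
    groupoidConv (groupoidDelta ⟨c, d, g⟩) (groupoidDelta ⟨u, v, e⟩) ξ =
      if h : u = d then (if ξ = ⟨c, v, g ≫ eqToHom h.symm ≫ e⟩ then 1 else 0) else 0 := by
  unfold groupoidConv groupoidDelta
  rw [Fintype.sum_eq_single c (fun x hx => ?_)]
  · rw [Fintype.sum_eq_single u (fun y hy => ?_)]
    · rw [Fintype.sum_eq_single v (fun z hz => ?_)]
      · by_cases h : u = d
        · subst h
          rw [Fintype.sum_eq_single g (fun a ha => ?_)]
          · rw [Fintype.sum_eq_single e (fun b hb => ?_)]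
            · simp [eq_comm]
            · simp [Sigma.mk.inj_iff, hb]
          · simp [Sigma.mk.inj_iff, ha]
        · simp only [dif_neg h]
          apply Finset.sum_eq_zero; intro a _
          apply Finset.sum_eq_zero; intro b _
          simp [Sigma.mk.inj_iff, fun hh : u = d => h hh]
      · apply Finset.sum_eq_zero; intro a _
        apply Finset.sum_eq_zero; intro b _
        simp [Sigma.mk.inj_iff, hz]
    · apply Finset.sum_eq_zero; intro z _
      apply Finset.sum_eq_zero; intro a _
      apply Finset.sum_eq_zero; intro b _
      simp [Sigma.mk.inj_iff, hy]
  · apply Finset.sum_eq_zero; intro y _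
    apply Finset.sum_eq_zero; intro z _
    apply Finset.sum_eq_zero; intro a _
    apply Finset.sum_eq_zero; intro b _
    simp [Sigma.mk.inj_iff, hx]

lemma groupoidM_apply (γ ξ η : Σ x y : G, x ⟶ y) :
    groupoidM γ ξ η = groupoidConv (groupoidDelta γ) (groupoidDelta η) ξ := by
  have hb : ((Pi.basisFun ℂ (Σ x y : G, x ⟶ y)) η : (Σ x y : G, x ⟶ y) → ℂ)
      = groupoidDelta η := by
    funext i
    simp [groupoidDelta, Pi.single_apply]
  rw [← hb]
  simp [groupoidM, LinearMap.toMatrix_apply, groupoidD]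

lemma groupoidM_apply' (c d : G) (g : c ⟶ d) (u v : G) (e : u ⟶ v)
    (ξ : Σ x y : G, x ⟶ y) :
    groupoidM ⟨c, d, g⟩ ξ ⟨u, v, e⟩ =
      if h : u = d then (if ξ = ⟨c, v, g ≫ eqToHom h.symm ≫ e⟩ then 1 else 0) else 0 := by
  rw [groupoidM_apply, groupoidConv_delta_delta]

lemma groupoidM_trace_mul_transpose (γ₁ γ₂ : Σ x y : G, x ⟶ y) :
    Matrix.trace (groupoidM γ₁ * (groupoidM γ₂)ᵀ) =
      ∑ η : Σ x y : G, x ⟶ y, ∑ ξ : Σ x y : G, x ⟶ y,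
        groupoidM γ₁ ξ η * groupoidM γ₂ ξ η := by
  rw [Finset.sum_comm]
  simp [Matrix.trace, Matrix.mul_apply, Matrix.diag]

end Aux

open Matrix in
/-- For the matrices `M(γ)` of the regular realization in the delta basis:
`Tr[M(γ₁) M(γ₂)ᵀ] = 0` for `γ₁ ≠ γ₂`, while `Tr[M(γ) M(γ)ᵀ]` equals the number of
morphisms whose source is the target of `γ`; if the groupoid is connected, this equals
(number of objects) × (order of the isotropy group of any object). -/
theorem groupoidM_trace_orthogonality
    {G : Type*} [Groupoid G] [Fintype G] [DecidableEq G]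
    [∀ x y : G, Fintype (x ⟶ y)] [∀ x y : G, DecidableEq (x ⟶ y)] :
    (∀ γ₁ γ₂ : Σ x y : G, x ⟶ y, γ₁ ≠ γ₂ →
        Matrix.trace (groupoidM γ₁ * (groupoidM γ₂)ᵀ) = 0) ∧
    (∀ γ : Σ x y : G, x ⟶ y,
        Matrix.trace (groupoidM γ * (groupoidM γ)ᵀ) =
          (Fintype.card {η : Σ x y : G, x ⟶ y // η.1 = γ.2.1} : ℂ)) ∧
    ((∀ a b : G, Nonempty (a ⟶ b)) →
      ∀ (γ : Σ x y : G, x ⟶ y) (x₀ : G),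
        Matrix.trace (groupoidM γ * (groupoidM γ)ᵀ) =
          (Fintype.card G : ℂ) * (Fintype.card (x₀ ⟶ x₀) : ℂ)) := by
  -- common diagonal computation
  have key : ∀ γ : Σ x y : G, x ⟶ y,
      Matrix.trace (groupoidM γ * (groupoidM γ)ᵀ) =
        (Fintype.card {η : Σ x y : G, x ⟶ y // η.1 = γ.2.1} : ℂ) := by
    rintro ⟨c, d, g⟩
    rw [groupoidM_trace_mul_transpose]
    have step : ∀ η : Σ x y : G, x ⟶ y,
        (∑ ξ : Σ x y : G, x ⟶ y, groupoidM ⟨c, d, g⟩ ξ η * groupoidM ⟨c, d, g⟩ ξ η)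
          = if η.1 = d then (1 : ℂ) else 0 := by
      rintro ⟨u, v, e⟩
      by_cases h : u = d
      · subst h
        simp [groupoidM_apply', ite_and, Finset.sum_ite_eq']
      · simp [groupoidM_apply', h]
    rw [Finset.sum_congr rfl (fun η _ => step η)]
    simp [Finset.sum_boole, Fintype.card_subtype]
  refine ⟨?_, key, ?_⟩
  · rintro ⟨c, d, g⟩ ⟨c', d', g'⟩ hne
    rw [groupoidM_trace_mul_transpose]
    apply Finset.sum_eq_zero
    rintro ⟨u, v, e⟩ -
    by_cases h₁ : u = d
    · by_cases h₂ : u = d'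
      · subst h₁; subst h₂
        have hAB : (⟨c, v, g ≫ e⟩ : Σ x y : G, x ⟶ y) ≠ ⟨c', v, g' ≫ e⟩ := by
          intro hab
          obtain ⟨rfl, h2⟩ := Sigma.mk.inj_iff.mp hab
          obtain ⟨-, h3⟩ := Sigma.mk.inj_iff.mp (eq_of_heq h2)
          have hce : g ≫ e = g' ≫ e := eq_of_heq h3
          have hg : g = g' := by
            have := congrArg (fun t => t ≫ Groupoid.inv e) hce
            simpa using this
          exact hne (by rw [hg])
        apply Finset.sum_eq_zero
        intro ξ _
        rw [groupoidM_apply' c u g u v e ξ, groupoidM_apply' c' u g' u v e ξ,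
          dif_pos rfl, dif_pos rfl]
        simp only [eqToHom_refl, Category.id_comp]
        split_ifs with h1 h2
        · exact absurd (h1.symm.trans h2) hAB
        all_goals simp
      · apply Finset.sum_eq_zero
        intro ξ _
        simp [groupoidM_apply', h₂]
    · apply Finset.sum_eq_zero
      intro ξ _
      simp [groupoidM_apply', h₁]
  · intro hconn γ x₀
    rw [key γ]
    have e1 : {η : Σ x y : G, x ⟶ y // η.1 = γ.2.1} ≃ Σ v : G, γ.2.1 ⟶ v :=
      { toFun := fun p => ⟨p.1.2.1, eqToHom p.2.symm ≫ p.1.2.2⟩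
        invFun := fun p => ⟨⟨γ.2.1, p.1, p.2⟩, rfl⟩
        left_inv := by rintro ⟨⟨u, v, f⟩, h⟩; dsimp at h; subst h; simp
        right_inv := by rintro ⟨v, f⟩; simp }
    rw [Fintype.card_congr e1, Fintype.card_sigma]
    have e2 : ∀ v : G, Fintype.card (γ.2.1 ⟶ v) = Fintype.card (x₀ ⟶ x₀) := by
      intro v
      obtain ⟨p⟩ := hconn x₀ γ.2.1
      obtain ⟨q⟩ := hconn v x₀
      exact Fintype.card_congr (Iso.homCongr (asIso p).symm (asIso q))
    rw [Finset.sum_congr rfl (fun v _ => e2 v), Finset.sum_const]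
    simp [mul_comm]
end

section
/- For all natural numbers m, n, the integral over ℂ (with respect to the Lebesgue volume measure on ℂ) satisfies ∫_{z ∈ ℂ} conj(z)^m · z^n · exp(−‖z‖²) dz = π · n! if m = n, and = 0 if m ≠ n. (This Gaussian moment identity expresses the resolution of the identity (1/π) ∫ d²z |z⟩⟨z| = 𝕀 for coherent states in the number basis.) -/
open MeasureTheory Real Set

lemma aux_angular (k : ℤ) (hk : k ≠ 0) :
    ∫ θ in Ioo (-π) π, Complex.exp ((k : ℂ) * θ * Complex.I) = 0 := by
  have hle : (-π : ℝ) ≤ π := by linarith [Real.pi_pos]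
  rw [← integral_Ioc_eq_integral_Ioo, ← intervalIntegral.integral_of_le hle]
  have hc : ((k : ℂ) * Complex.I) ≠ 0 := by
    simp [Complex.I_ne_zero, hk]
  have hcomm : ∀ θ : ℝ, (k : ℂ) * θ * Complex.I = ((k : ℂ) * Complex.I) * θ := by
    intro θ; ring
  simp_rw [hcomm]
  rw [integral_exp_mul_complex hc]
  have h2 : Complex.exp ((k : ℂ) * Complex.I * (π : ℝ)) =
      Complex.exp ((k : ℂ) * Complex.I * ((-π : ℝ) : ℝ)) *
        Complex.exp ((k : ℂ) * (2 * (π : ℂ) * Complex.I)) := by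
    rw [← Complex.exp_add]; push_cast; ring_nf
  rw [h2, Complex.exp_int_mul_two_pi_mul_I, mul_one, sub_self, zero_div]

lemma aux_radial (j : ℕ) :
    ∫ r in Ioi (0 : ℝ), r ^ (j + 1) * Real.exp (-r ^ 2) =
      (1 / 2) * Real.Gamma (((j : ℝ) + 2) / 2) := by
  have hj : (0 : ℝ) ≤ (j : ℝ) := Nat.cast_nonneg j
  rw [show ((j : ℝ) + 2) / 2 = (((j : ℝ) + 1) + 1) / 2 by ring,
    ← integral_rpow_mul_exp_neg_rpow (by norm_num : (0:ℝ) < 2)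
      (by linarith : (-1 : ℝ) < (j : ℝ) + 1)]
  refine setIntegral_congr_fun measurableSet_Ioi (fun x hx => ?_)
  rw [mem_Ioi] at hx
  rw [show ((j : ℝ) + 1) = ((j + 1 : ℕ) : ℝ) by push_cast; ring,
    Real.rpow_natCast, show ((2 : ℝ)) = ((2 : ℕ) : ℝ) by norm_num, Real.rpow_natCast]

/-- The Gaussian moment identity over ℂ (with its Lebesgue volume measure):
`∫ conj(z)^m · z^n · exp(−‖z‖²) dz = π · n!` if `m = n`, and `0` otherwise.  This
expresses the coherent-state resolution of the identity `(1/π) ∫ d²z |z⟩⟨z| = 𝕀` in the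
number basis. -/
theorem integral_conj_pow_mul_pow_mul_gaussian (m n : ℕ) :
    ∫ z : ℂ, (starRingEnd ℂ) z ^ m * z ^ n * (Real.exp (-‖z‖ ^ 2) : ℂ) =
      if m = n then (Real.pi : ℂ) * (n.factorial : ℂ) else 0 := by
  set k : ℤ := (n : ℤ) - (m : ℤ) with hk
  have key : (∫ z : ℂ, (starRingEnd ℂ) z ^ m * z ^ n * (Real.exp (-‖z‖ ^ 2) : ℂ)) =
      (∫ r in Ioi (0 : ℝ), ((r ^ (m + n + 1) * Real.exp (-r ^ 2) : ℝ) : ℂ)) *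
        ∫ θ in Ioo (-π) π, Complex.exp ((k : ℂ) * θ * Complex.I) := by
    rw [← Complex.integral_comp_polarCoord_symm
      (fun z => (starRingEnd ℂ) z ^ m * z ^ n * (Real.exp (-‖z‖ ^ 2) : ℂ)),
      polarCoord_target, Measure.volume_eq_prod ℝ ℝ, ← setIntegral_prod_mul]
    refine setIntegral_congr_fun (measurableSet_Ioi.prod measurableSet_Ioo) (fun p hp => ?_)
    obtain ⟨hp1, hp2⟩ := hp
    rw [mem_Ioi] at hp1
    have hw : Complex.polarCoord.symm p = (p.1 : ℂ) * Complex.exp (p.2 * Complex.I) := by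
      rw [Complex.polarCoord_symm_apply, Complex.exp_mul_I, Complex.ofReal_cos,
        Complex.ofReal_sin]
    have hnorm : ‖Complex.polarCoord.symm p‖ = p.1 := by
      rw [Complex.norm_polarCoord_symm, abs_of_pos hp1]
    have hconj : (starRingEnd ℂ) (Complex.polarCoord.symm p) =
        (p.1 : ℂ) * Complex.exp (-(p.2 * Complex.I)) := by
      rw [hw, map_mul, Complex.conj_ofReal, ← Complex.exp_conj, map_mul,
        Complex.conj_ofReal, Complex.conj_I, mul_neg]
    have hexp : Complex.exp (-((p.2 : ℂ) * Complex.I)) ^ m *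
        Complex.exp ((p.2 : ℂ) * Complex.I) ^ n =
        Complex.exp ((k : ℂ) * p.2 * Complex.I) := by
      rw [← Complex.exp_nat_mul, ← Complex.exp_nat_mul, ← Complex.exp_add]
      congr 1
      push_cast [hk]
      ring
    rw [Complex.real_smul, hconj, hnorm, hw, mul_pow, mul_pow]
    rw [show ((p.1 : ℂ)) ^ m * Complex.exp (-((p.2 : ℂ) * Complex.I)) ^ m *
        ((p.1 : ℂ) ^ n * Complex.exp ((p.2 : ℂ) * Complex.I) ^ n) * (Real.exp (-p.1 ^ 2) : ℂ) =
        (p.1 : ℂ) ^ (m + n) * (Real.exp (-p.1 ^ 2) : ℂ) *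
          (Complex.exp (-((p.2 : ℂ) * Complex.I)) ^ m *
            Complex.exp ((p.2 : ℂ) * Complex.I) ^ n) by
      rw [pow_add]; ring]
    rw [hexp]
    push_cast
    ring
  rw [key]
  by_cases h : m = n
  · subst h
    have hk0 : k = 0 := by simp [hk]
    have hang : (∫ θ in Ioo (-π) π, Complex.exp ((k : ℂ) * θ * Complex.I))
        = ((2 * π : ℝ) : ℂ) := by
      rw [hk0]
      simp only [Int.cast_zero, zero_mul, Complex.exp_zero]
      rw [setIntegral_const]
      rw [Real.volume_real_Ioo_of_le (by linarith [Real.pi_pos])]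
      rw [show π - -π = 2 * π by ring]
      simp
    have hrad : (∫ r in Ioi (0 : ℝ), ((r ^ (m + m + 1) * Real.exp (-r ^ 2) : ℝ) : ℂ)) =
        ((∫ r in Ioi (0 : ℝ), r ^ (m + m + 1) * Real.exp (-r ^ 2) : ℝ) : ℂ) := integral_ofReal
    rw [hang, if_pos rfl, hrad, aux_radial (m + m),
      show (((m + m : ℕ) : ℝ) + 2) / 2 = (m : ℝ) + 1 by push_cast; ring,
      Real.Gamma_nat_eq_factorial]
    push_cast
    ring
  · have hkne : k ≠ 0 := by
      simp only [hk, sub_ne_zero]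
      exact_mod_cast fun hmn => h (by exact_mod_cast hmn.symm)
    rw [aux_angular k hkne, mul_zero, if_neg h]
end
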